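/- Let x ∈ pℤ_p have Schneider continued fraction digits (a_i(x), b_i(x)) for 1 ≤ i ≤ n, with convergents P_n/Q_n defined by the standard recursion. Then x − P_n(x)/Q_n(x) ∈ p^{1 + a_1(x) + ⋯ + a_n(x)} ℤ_p. -/

import Mathlib

open scoped Classical

/-- The first digit `b_1(x)` of Schneider's continued fraction. -/
noncomputable def schneiderB1 (p : ℕ) [Fact p.Prime] (x : ℚ_[p]) : ℕ :=
  if h : ∃ b : ℕ, 1 ≤ b ∧ b ≤ p - 1 ∧ ‖(p : ℚ_[p]) ^ x.valuation / x - (b : ℚ_[p])‖ < 1 then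
    h.choose
  else 0

/-- Schneider's continued fraction map `T_p`. -/
noncomputable def schneiderT (p : ℕ) [Fact p.Prime] (x : ℚ_[p]) : ℚ_[p] :=
  if x = 0 then 0 else (p : ℚ_[p]) ^ x.valuation / x - (schneiderB1 p x : ℚ_[p])

/-- The digit `a_n(x) = v_p(T_p^{n-1} x)` (as an integer), for `n ≥ 1`. -/
noncomputable def schneiderA (p : ℕ) [Fact p.Prime] (n : ℕ) (x : ℚ_[p]) : ℤ :=
  ((schneiderT p)^[n - 1] x).valuation

section Aux

variable {p : ℕ} [hp : Fact p.Prime]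

lemma unit_norm' {x : ℚ_[p]} (hx : x ≠ 0) : ‖(p : ℚ_[p]) ^ x.valuation / x‖ = 1 := by
  rw [norm_div, Padic.norm_p_zpow, Padic.norm_eq_zpow_neg_valuation hx]
  apply div_self
  apply zpow_ne_zero
  exact_mod_cast hp.out.pos.ne'

lemma exists_b' {x : ℚ_[p]} (hx : x ≠ 0) :
    ∃ b : ℕ, 1 ≤ b ∧ b ≤ p - 1 ∧ ‖(p : ℚ_[p]) ^ x.valuation / x - (b : ℚ_[p])‖ < 1 := by
  have hu : ‖(p : ℚ_[p]) ^ x.valuation / x‖ = 1 := unit_norm' hx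
  set U : ℤ_[p] := ⟨(p : ℚ_[p]) ^ x.valuation / x, hu.le⟩ with hU
  refine ⟨U.appr 1, ?_, ?_, ?_⟩
  · by_contra h
    have hb0 : U.appr 1 = 0 := by omega
    have := PadicInt.appr_spec 1 U
    rw [hb0] at this
    have h2 : ‖U - ((0:ℕ) : ℤ_[p])‖ ≤ (p:ℝ)^(-(1:ℤ)) := by
      rw [show ((-1:ℤ)) = -(1:ℕ) by norm_num, PadicInt.norm_le_pow_iff_mem_span_pow]
      simpa using this
    have hU1 : ‖U‖ = 1 := by rw [PadicInt.norm_def]; exact hu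
    simp only [Nat.cast_zero, sub_zero, hU1] at h2
    have : (p:ℝ)^(-(1:ℤ)) < 1 := by
      apply zpow_lt_one_of_neg₀
      · exact_mod_cast hp.out.one_lt
      · norm_num
    linarith
  · have := U.appr_lt 1
    simp only [pow_one] at this
    omega
  · have := PadicInt.appr_spec 1 U
    have h2 : ‖U - (U.appr 1 : ℤ_[p])‖ ≤ (p:ℝ)^(-(1:ℤ)) := by
      rw [show ((-1:ℤ)) = -(1:ℕ) by norm_num, PadicInt.norm_le_pow_iff_mem_span_pow]
      simpa using this
    have h3 : ‖(p : ℚ_[p]) ^ x.valuation / x - (U.appr 1 : ℚ_[p])‖ ≤ (p:ℝ)^(-(1:ℤ)) := by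
      rw [show ((p : ℚ_[p]) ^ x.valuation / x - (U.appr 1 : ℚ_[p]))
        = ((U - (U.appr 1 : ℤ_[p]) : ℤ_[p]) : ℚ_[p]) from by
          rw [PadicInt.coe_sub, PadicInt.coe_natCast, hU]]
      rw [← PadicInt.norm_def]
      exact h2
    have : (p:ℝ)^(-(1:ℤ)) < 1 := by
      apply zpow_lt_one_of_neg₀
      · exact_mod_cast hp.out.one_lt
      · norm_num
    linarith

lemma b1_spec' {x : ℚ_[p]} (hx : x ≠ 0) :
    1 ≤ schneiderB1 p x ∧ schneiderB1 p x ≤ p - 1 ∧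
    ‖(p : ℚ_[p]) ^ x.valuation / x - (schneiderB1 p x : ℚ_[p])‖ < 1 := by
  rw [schneiderB1, dif_pos (exists_b' hx)]
  exact (exists_b' hx).choose_spec

lemma b1_norm' {x : ℚ_[p]} (hx : x ≠ 0) : ‖(schneiderB1 p x : ℚ_[p])‖ = 1 := by
  obtain ⟨h1, h2, _⟩ := b1_spec' hx
  have hple := hp.out.two_le
  refine le_antisymm (by exact_mod_cast Padic.norm_int_le_one (schneiderB1 p x : ℤ)) ?_
  by_contra h
  push_neg at h
  have : (p:ℤ) ∣ (schneiderB1 p x : ℤ) := by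
    rw [← Padic.norm_intCast_lt_one_iff]
    exact_mod_cast h
  have := Int.le_of_dvd (by exact_mod_cast h1) this
  omega

lemma T_norm_lt {x : ℚ_[p]} (hx : x ≠ 0) : ‖schneiderT p x‖ < 1 := by
  rw [schneiderT, if_neg hx]
  exact (b1_spec' hx).2.2

lemma iter_norm_lt {x : ℚ_[p]} (hx : ‖x‖ < 1) : ∀ k, ‖(schneiderT p)^[k] x‖ < 1 := by
  intro k
  induction k with
  | zero => simpa using hx
  | succ k ih =>
    rw [Function.iterate_succ_apply']
    rcases eq_or_ne ((schneiderT p)^[k] x) 0 with h | h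
    · rw [h, schneiderT, if_pos rfl]; norm_num
    · exact T_norm_lt h

lemma key_eq' {y : ℚ_[p]} (hy : y ≠ 0) :
    y * ((schneiderB1 p y : ℚ_[p]) + schneiderT p y) = (p : ℚ_[p]) ^ y.valuation := by
  rw [schneiderT, if_neg hy, add_sub_cancel, mul_div_cancel₀ _ hy]

lemma val_ge_one' {y : ℚ_[p]} (hy : y ≠ 0) (h : ‖y‖ < 1) : 1 ≤ y.valuation := by
  by_contra h'
  push_neg at h'
  have hv : 0 ≤ -y.valuation := by omega
  rw [Padic.norm_eq_zpow_neg_valuation hy] at h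
  have h1 : (1:ℝ) ≤ (p:ℝ) ^ (-y.valuation) :=
    one_le_zpow₀ (by exact_mod_cast hp.out.one_le) hv
  linarith

end Aux

/-- If `x ∈ pℤ_p` has its first `n` Schneider digits defined, and `P_k/Q_k` are the
convergents given by the standard recursion, then
`x - P_n/Q_n ∈ p^{1 + a_1(x) + ⋯ + a_n(x)} ℤ_p`. -/
theorem stmt_5 (p : ℕ) [hp : Fact p.Prime] (x : ℚ_[p]) (hx : ‖x‖ < 1) (n : ℕ) (hn : 1 ≤ n)
    (hne : ∀ k, k < n → (schneiderT p)^[k] x ≠ 0)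
    (P Q : ℕ → ℚ_[p])
    (hP0 : P 0 = 0) (hQ0 : Q 0 = 1)
    (hP1 : P 1 = (p : ℚ_[p]) ^ schneiderA p 1 x)
    (hQ1 : Q 1 = (schneiderB1 p x : ℚ_[p]))
    (hPrec : ∀ m, 2 ≤ m → P m = (schneiderB1 p ((schneiderT p)^[m - 1] x) : ℚ_[p]) * P (m - 1)
      + (p : ℚ_[p]) ^ schneiderA p m x * P (m - 2))
    (hQrec : ∀ m, 2 ≤ m → Q m = (schneiderB1 p ((schneiderT p)^[m - 1] x) : ℚ_[p]) * Q (m - 1)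
      + (p : ℚ_[p]) ^ schneiderA p m x * Q (m - 2)) :
    ‖x - P n / Q n‖ ≤ (p : ℝ) ^ (-(1 + ∑ i ∈ Finset.Icc 1 n, schneiderA p i x)) := by
  have hp1 : (1:ℝ) < p := by exact_mod_cast hp.out.one_lt
  have hp0 : (p:ℝ) ≠ 0 := by positivity
  have hiter : ∀ k, ‖(schneiderT p)^[k] x‖ < 1 := iter_norm_lt hx
  have h0 : x ≠ 0 := hne 0 hn
  -- key identity
  have key : ∀ m, 1 ≤ m → m ≤ n →
      x * (Q m + (schneiderT p)^[m] x * Q (m-1))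
        = P m + (schneiderT p)^[m] x * P (m-1) := by
    intro m hm
    induction m, hm using Nat.le_induction with
    | base =>
      intro _
      simp only [hQ1, hQ0, hP1, hP0, Nat.sub_self, Function.iterate_one, mul_one, mul_zero,
        add_zero]
      have := key_eq' (p := p) h0
      simpa [schneiderA] using this
    | succ m hm ih =>
      intro hmn
      have hm1 : m < n := lt_of_lt_of_le (Nat.lt_succ_self m) hmn
      have ihe := ih (le_of_lt hm1)
      have htm : (schneiderT p)^[m] x ≠ 0 := hne m hm1
      have hpa : (p:ℚ_[p]) ^ schneiderA p (m+1) x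
          = (schneiderT p)^[m] x
            * ((schneiderB1 p ((schneiderT p)^[m] x) : ℚ_[p]) + (schneiderT p)^[m+1] x) := by
        rw [Function.iterate_succ_apply',
          show schneiderA p (m+1) x = ((schneiderT p)^[m] x).valuation from by
            simp [schneiderA]]
        exact (key_eq' htm).symm
      have h2 : 2 ≤ m + 1 := by omega
      rw [hQrec (m+1) h2, hPrec (m+1) h2]
      simp only [Nat.add_sub_cancel, show m+1-2 = m-1 from by omega]
      rw [hpa]
      linear_combination ((schneiderB1 p ((schneiderT p)^[m] x) : ℚ_[p])
        + (schneiderT p)^[m+1] x) * ihe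
  -- determinant norm
  have det : ∀ m, 1 ≤ m → m ≤ n →
      ‖P m * Q (m-1) - P (m-1) * Q m‖
        = (p:ℝ) ^ (-(∑ i ∈ Finset.Icc 1 m, schneiderA p i x)) := by
    intro m hm
    induction m, hm using Nat.le_induction with
    | base =>
      intro _
      simp only [Nat.sub_self, hP0, hP1, hQ0, hQ1, mul_one, zero_mul, sub_zero]
      rw [Padic.norm_p_zpow]
      simp
    | succ m hm ih =>
      intro hmn
      have ihe := ih (by omega)
      have h2 : 2 ≤ m+1 := by omega
      have hrw : P (m+1) * Q m - P m * Q (m+1)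
          = -((p:ℚ_[p]) ^ schneiderA p (m+1) x * (P m * Q (m-1) - P (m-1) * Q m)) := by
        rw [hPrec (m+1) h2, hQrec (m+1) h2]
        simp only [Nat.add_sub_cancel, show m+1-2 = m-1 from by omega]
        ring
      rw [Nat.add_sub_cancel, hrw, norm_neg, norm_mul, Padic.norm_p_zpow, ihe,
        ← zpow_add₀ hp0]
      congr 1
      rw [Finset.sum_Icc_succ_top (by omega : 1 ≤ m+1)]
      ring
  -- a_m ≥ 1 and p^a small
  have hpa_lt : ∀ m, 1 ≤ m → m ≤ n → ‖(p:ℚ_[p]) ^ schneiderA p m x‖ < 1 := by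
    intro m h1 h2
    have hval : 1 ≤ schneiderA p m x :=
      val_ge_one' (hne (m-1) (by omega)) (hiter (m-1))
    rw [Padic.norm_p_zpow]
    calc (p:ℝ)^(-schneiderA p m x) < (p:ℝ)^(0:ℤ) := by
          apply zpow_lt_zpow_right₀ hp1; omega
      _ = 1 := by norm_num
  -- norm of Q
  have qnorm : ∀ m, m ≤ n → ‖Q m‖ = 1 := by
    intro m
    induction m using Nat.strong_induction_on with
    | _ m ih =>
      intro hmn
      match m, ih, hmn with
      | 0, _, _ => simp [hQ0]
      | 1, _, _ => rw [hQ1]; exact b1_norm' h0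
      | (m+2), ih, hmn =>
        have h1 := ih (m+1) (by omega) (by omega)
        have hq0 := ih m (by omega) (by omega)
        rw [hQrec (m+2) (by omega)]
        simp only [show m+2-1 = m+1 from rfl, show m+2-2 = m from rfl]
        have hb : ‖(schneiderB1 p ((schneiderT p)^[m+1] x) : ℚ_[p]) * Q (m+1)‖ = 1 := by
          rw [norm_mul, h1, b1_norm' (hne (m+1) (by omega)), one_mul]
        have hsmall : ‖(p:ℚ_[p]) ^ schneiderA p (m+2) x * Q m‖ < 1 := by
          rw [norm_mul, hq0, mul_one]
          exact hpa_lt (m+2) (by omega) (by omega)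
        rw [Padic.add_eq_max_of_ne (by rw [hb]; exact (ne_of_lt (hb ▸ hsmall : _ < _)).symm),
          hb, max_eq_left (le_of_lt (hb ▸ hsmall))]
  -- final computation
  have hQn1 : ‖Q n‖ = 1 := qnorm n le_rfl
  have hQn : Q n ≠ 0 := by intro h; rw [h] at hQn1; simp at hQn1
  have htlt : ‖(schneiderT p)^[n] x‖ < 1 := hiter n
  have htn : ‖(schneiderT p)^[n] x‖ ≤ (p:ℝ)^(-(1:ℤ)) := by
    rw [Padic.norm_le_pow_iff_norm_lt_pow_add_one]
    simpa using htlt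
  have keyn := key n hn le_rfl
  set t := (schneiderT p)^[n] x with ht
  set d := Q n + t * Q (n-1) with hd
  have hsm : ‖t * Q (n-1)‖ < 1 := by
    rw [norm_mul, qnorm (n-1) (by omega), mul_one]; exact htlt
  have hdnorm : ‖d‖ = 1 := by
    rw [hd, Padic.add_eq_max_of_ne (by rw [hQn1]; exact (ne_of_lt (hQn1 ▸ hsm)).symm),
      hQn1, max_eq_left (le_of_lt (hQn1 ▸ hsm))]
  have hdne : d ≠ 0 := by intro h; rw [h] at hdnorm; simp at hdnorm
  have heq : x - P n / Q n = t * (P (n-1) * Q n - P n * Q (n-1)) / (d * Q n) := by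
    rw [div_mul_eq_div_div, eq_div_iff hQn, sub_mul, div_mul_cancel₀ _ hQn,
      eq_div_iff hdne]
    linear_combination Q n * keyn
  have hdet : ‖P (n-1) * Q n - P n * Q (n-1)‖
      = (p:ℝ) ^ (-(∑ i ∈ Finset.Icc 1 n, schneiderA p i x)) := by
    rw [show P (n-1) * Q n - P n * Q (n-1) = -(P n * Q (n-1) - P (n-1) * Q n) from by ring,
      norm_neg]
    exact det n hn le_rfl
  rw [heq, norm_div, norm_mul, norm_mul, hdnorm, hQn1, hdet]
  simp only [one_mul, mul_one, div_one]
  calc ‖t‖ * (p:ℝ) ^ (-(∑ i ∈ Finset.Icc 1 n, schneiderA p i x))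
      ≤ (p:ℝ)^(-(1:ℤ)) * (p:ℝ) ^ (-(∑ i ∈ Finset.Icc 1 n, schneiderA p i x)) := by
        apply mul_le_mul_of_nonneg_right htn (by positivity)
    _ = (p:ℝ) ^ (-(1 + ∑ i ∈ Finset.Icc 1 n, schneiderA p i x)) := by
        rw [← zpow_add₀ hp0]; ring_nf
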